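/- Every point of X other than ⟨0,1,0⟩ has a unique representative of the form (x, y, 1) with x^{q+1} = y + y^q; in particular the number of pairs (x,y) ∈ F_{q^2}² with x^{q+1} = y + y^q is exactly q³. -/

import Mathlib

/-- The Hermitian form `β(u,v) = -x₁x₂^q + y₁z₂^q + z₁y₂^q` on `F_{q²}³`. -/
def herm {K : Type*} [Field K] (q : ℕ) (u v : Fin 3 → K) : K :=
  -(u 0 * v 0 ^ q) + u 1 * v 2 ^ q + u 2 * v 1 ^ q

section aux

open Polynomial Finset

variable {K : Type} [Field K] [Fintype K] [DecidableEq K]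

lemma roots_card_le (n : ℕ) (hn : 0 < n) (P : K[X]) (hPd : P.natDegree = n) (hP0 : P ≠ 0)
    (pred : K → Prop) [DecidablePred pred] (h : ∀ y, pred y → P.eval y = 0) :
    (Finset.univ.filter pred).card ≤ n := by
  have hsub : Finset.univ.filter pred ⊆ P.roots.toFinset := by
    intro y hy
    simp only [Multiset.mem_toFinset, mem_roots hP0, IsRoot]
    exact h y (by simpa using hy)
  calc (Finset.univ.filter pred).card ≤ P.roots.toFinset.card := Finset.card_le_card hsub
    _ ≤ Multiset.card P.roots := Multiset.toFinset_card_le _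
    _ ≤ P.natDegree := P.card_roots'
    _ = n := hPd

lemma count_aux (p e : ℕ) (hp : p.Prime) (he : 0 < e) [CharP K p]
    (hcard : Fintype.card K = (p ^ e) ^ 2) :
    (Finset.univ.filter
        (fun xy : K × K => xy.1 ^ (p ^ e + 1) = xy.2 + xy.2 ^ (p ^ e))).card
      = (p ^ e) ^ 3 := by
  haveI : Fact p.Prime := ⟨hp⟩
  have hq2 : 2 ≤ p ^ e := by
    calc 2 ≤ p := hp.two_le
    _ = p ^ 1 := (pow_one p).symm
    _ ≤ p ^ e := Nat.pow_le_pow_right hp.pos he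
  have hq0 : 0 < p ^ e := by omega
  have hpowc : ∀ a : K, a ^ ((p ^ e) * (p ^ e)) = a := by
    intro a
    have := FiniteField.pow_card a
    rwa [hcard, pow_two] at this
  have hqq : ∀ a : K, (a ^ p ^ e) ^ p ^ e = a := by
    intro a; rw [← pow_mul]; exact hpowc a
  classical
  set T : K → K := fun y => y + y ^ p ^ e with hT
  set fib : K → Finset K := fun c => Finset.univ.filter (fun y : K => T y = c) with hfib
  set im : Finset K := (Finset.univ : Finset K).image T with him
  -- all nonempty fibers have the same cardinality
  have hfib_card : ∀ c : K, (fib c).Nonempty → (fib c).card = (fib 0).card := by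
    intro c ⟨a, ha⟩
    have ha' : a + a ^ p ^ e = c := by simpa [hfib, hT] using ha
    apply Finset.card_nbij' (fun y => y - a) (fun y => y + a)
    · intro y hy
      have hy' : y + y ^ p ^ e = c := by simpa [hfib, hT] using hy
      simp only [hfib, hT, Finset.mem_coe, Finset.mem_filter, Finset.mem_univ, true_and]
      rw [sub_pow_char_pow]
      linear_combination hy' - ha'
    · intro y hy
      have hy' : y + y ^ p ^ e = 0 := by simpa [hfib, hT] using hy
      simp only [hfib, hT, Finset.mem_coe, Finset.mem_filter, Finset.mem_univ, true_and]
      rw [add_pow_char_pow]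
      linear_combination hy' + ha'
    · intro y _; ring
    · intro y _; ring
  -- fibers partition K
  have hpart : (p ^ e) * (p ^ e) = ∑ c ∈ im, (fib c).card := by
    have := Finset.card_eq_sum_card_fiberwise
      (s := (Finset.univ : Finset K)) (t := im) (f := T)
      (fun x _ => Finset.mem_image_of_mem _ (Finset.mem_univ x))
    rwa [Finset.card_univ, hcard, pow_two] at this
  have hconst : ∑ c ∈ im, (fib c).card = im.card * (fib 0).card := by
    rw [Finset.sum_congr rfl (fun c hc => ?_), Finset.sum_const, smul_eq_mul]
    obtain ⟨y, _, hy⟩ := Finset.mem_image.mp hc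
    exact hfib_card c ⟨y, by simp [hfib, hy]⟩
  -- degree bounds
  have hPdeg : (X ^ (p ^ e) + X : K[X]).natDegree = p ^ e := by
    compute_degree!
    rw [if_neg (by omega : ¬1 = p ^ e)]
    simp
  have hQdeg : (X ^ (p ^ e) - X : K[X]).natDegree = p ^ e := by
    compute_degree!
    rw [if_neg (by omega : ¬1 = p ^ e)]
    simp
  have hP0 : (X ^ (p ^ e) + X : K[X]) ≠ 0 := by
    intro h
    rw [h, natDegree_zero] at hPdeg
    omega
  have hQ0 : (X ^ (p ^ e) - X : K[X]) ≠ 0 := by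
    intro h
    rw [h, natDegree_zero] at hQdeg
    omega
  have hk_le : (fib 0).card ≤ p ^ e := by
    apply roots_card_le (p ^ e) hq0 (X ^ (p ^ e) + X : K[X]) hPdeg hP0
    intro y hy
    have hy' : y + y ^ p ^ e = 0 := hy
    simp only [eval_add, eval_pow, eval_X]
    linear_combination hy'
  set Fs : Finset K := Finset.univ.filter (fun c : K => c ^ p ^ e = c) with hFs
  have hFs_le : Fs.card ≤ p ^ e := by
    apply roots_card_le (p ^ e) hq0 (X ^ (p ^ e) - X : K[X]) hQdeg hQ0
    intro y hy
    simp only [eval_sub, eval_pow, eval_X]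
    linear_combination hy
  have him_sub : im ⊆ Fs := by
    intro c hc
    obtain ⟨y, _, hy⟩ := Finset.mem_image.mp hc
    simp only [hFs, Finset.mem_filter, Finset.mem_univ, true_and]
    have : (y + y ^ p ^ e) ^ p ^ e = y + y ^ p ^ e := by
      rw [add_pow_char_pow, hqq]
      ring
    rw [← hy]
    exact this
  have him_le : im.card ≤ p ^ e := le_trans (Finset.card_le_card him_sub) hFs_le
  -- solve for the cardinalities
  have hmul : im.card * (fib 0).card = (p ^ e) * (p ^ e) := by rw [← hconst, ← hpart]
  have hk : (fib 0).card = p ^ e := by nlinarith [hmul, him_le, hk_le, hq0]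
  have him_card : im.card = p ^ e := by nlinarith [hmul, him_le, hk_le, hq0]
  have him_eq : im = Fs := Finset.eq_of_subset_of_card_le him_sub (by omega)
  -- x ^ (q+1) is always in the image
  have hx_mem : ∀ x : K, x ^ (p ^ e + 1) ∈ im := by
    intro x
    rw [him_eq]
    simp only [hFs, Finset.mem_filter, Finset.mem_univ, true_and]
    rw [pow_succ, mul_pow, hqq]
    ring
  have hx_card : ∀ x : K, (fib (x ^ (p ^ e + 1))).card = p ^ e := by
    intro x
    obtain ⟨y, _, hy⟩ := Finset.mem_image.mp (hx_mem x)
    rw [hfib_card _ ⟨y, by simp [hfib, hy]⟩, hk]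
  -- fiberwise count over the product
  have hsplit : (Finset.univ.filter
        (fun xy : K × K => xy.1 ^ (p ^ e + 1) = xy.2 + xy.2 ^ (p ^ e))).card
      = ∑ x : K, (fib (x ^ (p ^ e + 1))).card := by
    rw [Finset.card_eq_sum_card_fiberwise
      (s := Finset.univ.filter
        (fun xy : K × K => xy.1 ^ (p ^ e + 1) = xy.2 + xy.2 ^ (p ^ e)))
      (t := (Finset.univ : Finset K)) (f := Prod.fst) (fun x _ => Finset.mem_univ _)]
    apply Finset.sum_congr rfl
    intro x _
    apply Finset.card_nbij' (fun xy => xy.2) (fun y => (x, y))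
    · intro xy hxy
      simp only [Finset.mem_coe, Finset.mem_filter, Finset.mem_univ, true_and] at hxy
      simp only [hfib, hT, Finset.mem_coe, Finset.mem_filter, Finset.mem_univ, true_and]
      rw [← hxy.2, hxy.1]
    · intro y hy
      simp only [hfib, hT, Finset.mem_coe, Finset.mem_filter, Finset.mem_univ, true_and] at hy
      simp only [Finset.mem_coe, Finset.mem_filter, Finset.mem_univ, true_and]
      exact ⟨hy.symm, trivial⟩
    · intro xy hxy
      simp only [Finset.mem_coe, Finset.mem_filter, Finset.mem_univ, true_and] at hxy
      rw [← hxy.2]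
    · intro y _; rfl
  rw [hsplit]
  rw [Finset.sum_congr rfl (fun x _ => hx_card x), Finset.sum_const, smul_eq_mul,
    Finset.card_univ, hcard]
  ring

end aux

theorem affine_representatives
    (p e q : ℕ) (hp : p.Prime) (he : 0 < e) (hq : q = p ^ e)
    (K : Type) [Field K] [Fintype K] [DecidableEq K]
    (hcard : Fintype.card K = q ^ 2) :
    (∀ u : Fin 3 → K, u ≠ 0 → herm q u u = 0 →
      Submodule.span K {u} ≠ Submodule.span K {(![0, 1, 0] : Fin 3 → K)} →
      ∃! xy : K × K,
        Submodule.span K {u} = Submodule.span K {(![xy.1, xy.2, 1] : Fin 3 → K)}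
        ∧ xy.1 ^ (q + 1) = xy.2 + xy.2 ^ q)
    ∧ (Finset.univ.filter (fun xy : K × K => xy.1 ^ (q + 1) = xy.2 + xy.2 ^ q)).card
        = q ^ 3 := by
  subst hq
  haveI : Fact p.Prime := ⟨hp⟩
  haveI hcharP : CharP K p := by
    haveI h1 : CharP K (ringChar K) := ringChar.charP K
    obtain ⟨n, hpr, hcard'⟩ := FiniteField.card K (ringChar K)
    have hd : ringChar K ∣ p := by
      have hdc : ringChar K ∣ Fintype.card K := by
        rw [hcard']
        exact dvd_pow_self _ (by exact_mod_cast n.pos.ne')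
      rw [hcard, ← pow_mul] at hdc
      exact hpr.dvd_of_dvd_pow hdc
    have heq := (Nat.prime_dvd_prime_iff_eq hpr hp).mp hd
    exact heq ▸ h1
  have hqe0 : p ^ e ≠ 0 := pow_ne_zero _ hp.pos.ne'
  constructor
  · intro u hu h0 hne
    have hc2 : u 2 ≠ 0 := by
      intro h2
      have h0' : -(u 0 * u 0 ^ p ^ e) + u 1 * u 2 ^ p ^ e + u 2 * u 1 ^ p ^ e = 0 := h0
      rw [h2] at h0'
      simp only [zero_pow hqe0, mul_zero, zero_mul, add_zero, neg_add_cancel,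
        neg_eq_zero] at h0'
      have h00 : u 0 = 0 := by
        rcases mul_eq_zero.mp h0' with h | h
        · exact h
        · exact pow_eq_zero_iff hqe0 |>.mp h
      apply hne
      have hb : u 1 ≠ 0 := by
        intro h1
        apply hu
        funext i
        fin_cases i <;> simp [h00, h1, h2]
      have huu : u = u 1 • ![0, 1, 0] := by
        funext i
        fin_cases i <;> simp [h00, h2]
      rw [huu]
      exact Submodule.span_singleton_smul_eq (isUnit_iff_ne_zero.mpr hb) _
    have key : u 0 * u 0 ^ p ^ e = u 1 * u 2 ^ p ^ e + u 2 * u 1 ^ p ^ e := by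
      have h0' : -(u 0 * u 0 ^ p ^ e) + u 1 * u 2 ^ p ^ e + u 2 * u 1 ^ p ^ e = 0 := h0
      linear_combination -h0'
    have hspan : Submodule.span K {u}
        = Submodule.span K {(![u 0 / u 2, u 1 / u 2, 1] : Fin 3 → K)} := by
      have hv : (![u 0 / u 2, u 1 / u 2, 1] : Fin 3 → K) = (u 2)⁻¹ • u := by
        funext i
        fin_cases i <;> simp [div_eq_inv_mul, Pi.smul_apply] <;> field_simp
      rw [hv]
      exact (Submodule.span_singleton_smul_eq
        (isUnit_iff_ne_zero.mpr (inv_ne_zero hc2)) u).symm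
    have heqn : (u 0 / u 2) ^ (p ^ e + 1) = u 1 / u 2 + (u 1 / u 2) ^ p ^ e := by
      rw [div_pow, div_pow, div_add_div _ _ hc2 (pow_ne_zero _ hc2),
        div_eq_div_iff (pow_ne_zero _ hc2) (mul_ne_zero hc2 (pow_ne_zero _ hc2))]
      linear_combination (u 2 * u 2 ^ p ^ e) * key
    refine ⟨(u 0 / u 2, u 1 / u 2), ⟨hspan, heqn⟩, ?_⟩
    rintro ⟨x', y'⟩ ⟨hspan', -⟩
    have hss : Submodule.span K {(![x', y', 1] : Fin 3 → K)}
        = Submodule.span K {(![u 0 / u 2, u 1 / u 2, 1] : Fin 3 → K)} :=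
      hspan'.symm.trans hspan
    have hmem : (![x', y', 1] : Fin 3 → K)
        ∈ Submodule.span K {(![u 0 / u 2, u 1 / u 2, 1] : Fin 3 → K)} := by
      rw [← hss]
      exact Submodule.mem_span_singleton_self _
    obtain ⟨c, hcc⟩ := Submodule.mem_span_singleton.mp hmem
    have h2 : c = 1 := by
      have := congrFun hcc 2
      simpa using this
    have hx : x' = u 0 / u 2 := by
      have := congrFun hcc 0
      rw [h2] at this
      simpa using this.symm
    have hy : y' = u 1 / u 2 := by
      have := congrFun hcc 1
      rw [h2] at this
      simpa using this.symm
    exact Prod.ext hx hy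
  · exact count_aux p e hp he hcard
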